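/- Let p ≡ 1 (mod 8) be prime. Then the number of 𝔽_p-points of the elliptic curve y² = x³ - x is divisible by 8. -/

import Mathlib

/-- The elliptic curve `y² = x³ - x` over `ℤ/pℤ`, as a Weierstrass curve in affine coordinates. -/
noncomputable def Ecurve (p : ℕ) : WeierstrassCurve.Affine (ZMod p) :=
  { a₁ := 0, a₂ := 0, a₃ := 0, a₄ := -1, a₆ := 0 }

namespace Stmt17Aux

open WeierstrassCurve.Affine WeierstrassCurve.Affine.Point

variable {F : Type} [Field F]

lemma some_eq_some {W : WeierstrassCurve.Affine F} {x₁ y₁ x₂ y₂ : F}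
    (h₁ : W.Nonsingular x₁ y₁) (h₂ : W.Nonsingular x₂ y₂) (hx : x₁ = x₂) (hy : y₁ = y₂) :
    Point.some _ _ h₁ = Point.some _ _ h₂ := by subst hx; subst hy; rfl

lemma x_eq_of_some_eq {W : WeierstrassCurve.Affine F} {x₁ y₁ x₂ y₂ : F}
    {h₁ : W.Nonsingular x₁ y₁} {h₂ : W.Nonsingular x₂ y₂}
    (h : Point.some _ _ h₁ = Point.some _ _ h₂) : x₁ = x₂ := by
  injection h

end Stmt17Aux

open WeierstrassCurve.Affine WeierstrassCurve.Affine.Point Stmt17Aux in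
theorem stmt17 (p : ℕ) (hp : p.Prime) (h8 : p % 8 = 1) :
    8 ∣ Nat.card (Ecurve p).Point := by
  haveI : Fact p.Prime := ⟨hp⟩
  set F := ZMod p
  have hp2 : (2 : F) ≠ 0 := by
    intro h
    have h2 : ((2 : ℕ) : F) = 0 := by exact_mod_cast h
    have hd : p ∣ 2 := (ZMod.natCast_eq_zero_iff 2 p).mp h2
    have hle : p ≤ 2 := Nat.le_of_dvd (by norm_num) hd
    have h2le := hp.two_le
    omega
  -- get i with i² = -1
  obtain ⟨i, hi⟩ : ∃ i : F, i ^ 2 = -1 := by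
    have h4 : p % 4 ≠ 3 := by omega
    obtain ⟨i, hi⟩ := (ZMod.exists_sq_eq_neg_one_iff (p := p)).mpr h4
    exact ⟨i, by rw [sq]; exact hi.symm⟩
  have hi1 : i ≠ 1 := fun h => hp2 (by rw [h] at hi; linear_combination hi)
  have hi1' : i - 1 ≠ 0 := sub_ne_zero.mpr hi1
  set W : WeierstrassCurve.Affine F := Ecurve p with hW
  have ha₁ : W.a₁ = 0 := rfl
  have ha₂ : W.a₂ = 0 := rfl
  have ha₃ : W.a₃ = 0 := rfl
  have ha₄ : W.a₄ = -1 := rfl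
  have ha₆ : W.a₆ = 0 := rfl
  have hnegY : ∀ x y : F, W.negY x y = -y := fun x y => by
    simp [WeierstrassCurve.Affine.negY, ha₁, ha₃]
  have heq : ∀ x y : F, y ^ 2 = x ^ 3 - x → W.Equation x y := fun x y h => by
    rw [equation_iff, ha₁, ha₂, ha₃, ha₄, ha₆]; linear_combination h
  -- the three points
  have hP : W.Nonsingular i (i - 1) := by
    refine (nonsingular_iff ..).mpr ⟨heq _ _ (by linear_combination (1 - i) * hi), Or.inr ?_⟩
    rw [ha₁, ha₃]
    intro h
    have h2 : (2 : F) * (i - 1) = 0 := by linear_combination h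
    exact hi1' ((mul_eq_zero.mp h2).resolve_left hp2)
  have hO2 : W.Nonsingular 0 0 := by
    refine (nonsingular_iff ..).mpr ⟨heq _ _ (by ring), Or.inl ?_⟩
    rw [ha₁, ha₂, ha₄]
    intro h
    exact one_ne_zero (α := F) (by linear_combination h)
  have hT : W.Nonsingular 1 0 := by
    refine (nonsingular_iff ..).mpr ⟨heq _ _ (by ring), Or.inl ?_⟩
    rw [ha₁, ha₂, ha₄]
    intro h
    exact hp2 (by linear_combination -h)
  set P : W.Point := Point.some _ _ hP with hPdef
  set O2 : W.Point := Point.some _ _ hO2 with hO2def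
  set T : W.Point := Point.some _ _ hT with hTdef
  -- key computations
  have hyne : i - 1 ≠ W.negY i (i - 1) := by
    rw [hnegY]
    intro h
    have h2 : (2 : F) * (i - 1) = 0 := by linear_combination h
    exact hi1' ((mul_eq_zero.mp h2).resolve_left hp2)
  have hPP : P + P = O2 := by
    rw [hPdef, add_self_of_Y_ne hyne, hO2def]
    have hden : i - 1 - -(i - 1) ≠ 0 := by
      intro h
      have h2 : (2 : F) * (i - 1) = 0 := by linear_combination h
      exact hi1' ((mul_eq_zero.mp h2).resolve_left hp2)
    have hslope : W.slope i i (i - 1) (i - 1) = -2 / (i - 1) := by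
      rw [slope_of_Y_ne rfl hyne, hnegY, ha₁, ha₂, ha₄]
      rw [div_eq_div_iff hden hi1']
      linear_combination 3 * (i - 1) * hi
    have haddX : W.addX i i (W.slope i i (i - 1) (i - 1)) = 0 := by
      rw [WeierstrassCurve.Affine.addX, hslope, ha₁, ha₂]
      have e : (i - 1) * (i - 1)⁻¹ = 1 := mul_inv_cancel₀ hi1'
      simp only [div_eq_mul_inv]
      linear_combination 2*i*((i-1)*(i-1)⁻¹+1)*e - (2*i*(i-1)⁻¹^2 - 4*(i-1)⁻¹^2)*hi
    refine some_eq_some _ _ haddX ?_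
    rw [WeierstrassCurve.Affine.addY, hnegY, WeierstrassCurve.Affine.negAddY, haddX, hslope]
    have e : (i - 1) * (i - 1)⁻¹ = 1 := mul_inv_cancel₀ hi1'
    simp only [div_eq_mul_inv]
    linear_combination (-(i-1)⁻¹)*hi + (i-1)*e
  have hO2O2 : O2 + O2 = 0 := by
    rw [hO2def]
    exact add_self_of_Y_eq (by rw [hnegY]; ring)
  have hTT : T + T = 0 := by
    rw [hTdef]
    exact add_self_of_Y_eq (by rw [hnegY]; ring)
  have h4P : (4 : ℤ) • P = 0 := by
    have e : (4 : ℤ) • P = (2 : ℤ) • P + (2 : ℤ) • P := by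
      rw [← add_zsmul]; norm_num
    rw [e, two_zsmul, hPP, hO2O2]
  have h2T : (2 : ℤ) • T = 0 := by rw [two_zsmul, hTT]
  -- contradiction helpers
  have hPne0 : P ≠ 0 := some_ne_zero _
  have hO2ne0 : O2 ≠ 0 := some_ne_zero _
  have hTne0 : T ≠ 0 := some_ne_zero _
  have hPneT : P ≠ T := fun h => hi1 (x_eq_of_some_eq h)
  have hO2neT : O2 ≠ T := fun h => one_ne_zero (α := F) (x_eq_of_some_eq h).symm
  have hnegP : -P = Point.some _ _ ((nonsingular_neg ..).mpr hP) := rfl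
  have hnegPneT : -P ≠ T := fun h => hi1 (x_eq_of_some_eq (hnegP ▸ h))
  -- build the injective hom
  let fP : ZMod 4 →+ W.Point := ZMod.lift 4 ⟨zmultiplesHom _ P, h4P⟩
  let fQ : ZMod 2 →+ W.Point := ZMod.lift 2 ⟨zmultiplesHom _ T, h2T⟩
  let f : ZMod 4 × ZMod 2 →+ W.Point := fP.coprod fQ
  have hfP : ∀ m : ℤ, fP (m : ZMod 4) = m • P := fun m => ZMod.lift_coe _ _ m
  have hfQ : ∀ k : ℤ, fQ (k : ZMod 2) = k • T := fun k => ZMod.lift_coe _ _ k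
  have hmodP : ∀ m : ℤ, m • P = (m % 4) • P := by
    intro m
    conv_lhs => rw [show m = m / 4 * 4 + m % 4 from (Int.ediv_mul_add_emod m 4).symm]
    rw [add_zsmul, mul_zsmul, h4P, zsmul_zero, zero_add]
  have hmodT : ∀ k : ℤ, k • T = (k % 2) • T := by
    intro k
    conv_lhs => rw [show k = k / 2 * 2 + k % 2 from (Int.ediv_mul_add_emod k 2).symm]
    rw [add_zsmul, mul_zsmul, h2T, zsmul_zero, zero_add]
  have h3P : (3 : ℤ) • P = -P := by
    have : (3 : ℤ) • P + P = 0 := by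
      rw [← h4P, show (4 : ℤ) = 3 + 1 by norm_num, add_zsmul, one_zsmul]
    exact eq_neg_of_add_eq_zero_left this
  have hf : Function.Injective f := by
    rw [injective_iff_map_eq_zero]
    rintro ⟨a, b⟩ hab
    obtain ⟨m, rfl⟩ : ∃ m : ℤ, (m : ZMod 4) = a := ⟨a.val, by simp⟩
    obtain ⟨k, rfl⟩ : ∃ k : ℤ, (k : ZMod 2) = b := ⟨b.val, by simp⟩
    have hab' : m • P + k • T = 0 := by
      rw [← hfP, ← hfQ]; exact hab
    rw [hmodP, hmodT] at hab'
    have hm4 : m % 4 = 0 ∨ m % 4 = 1 ∨ m % 4 = 2 ∨ m % 4 = 3 := by omega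
    have hk2 : k % 2 = 0 ∨ k % 2 = 1 := by omega
    have h2Psmul : (2 : ℤ) • P = O2 := by rw [two_zsmul, hPP]
    have hnegO2 : -O2 = O2 := by
      rw [hO2def, neg_some]
      exact some_eq_some _ _ rfl (by rw [hnegY]; ring)
    have key : m % 4 = 0 ∧ k % 2 = 0 := by
      rcases hm4 with hm | hm | hm | hm <;> rcases hk2 with hk | hk <;>
          rw [hm, hk] at hab' <;>
          simp only [zero_zsmul, one_zsmul, h2Psmul, h3P, zero_add, add_zero] at hab'
      · exact ⟨hm, hk⟩
      · exact absurd hab' hTne0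
      · exact absurd hab' hPne0
      · exact absurd (neg_eq_of_add_eq_zero_right hab') hnegPneT
      · exact absurd hab' hO2ne0
      · exact absurd (hnegO2 ▸ neg_eq_of_add_eq_zero_right hab') hO2neT
      · exact absurd (neg_eq_zero.mp hab') hPne0
      · exact absurd (by rw [← neg_neg P]; exact neg_eq_of_add_eq_zero_right hab') hPneT
    have : (m : ZMod 4) = 0 := by
      have : (4 : ℤ) ∣ m := by omega
      exact (ZMod.intCast_zmod_eq_zero_iff_dvd m 4).mpr this
    have : (k : ZMod 2) = 0 := by
      have : (2 : ℤ) ∣ k := by omega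
      exact (ZMod.intCast_zmod_eq_zero_iff_dvd k 2).mpr ‹(2:ℤ) ∣ k›
    refine Prod.ext ?_ ?_ <;> simp_all
  -- conclude
  have hcard : Nat.card f.range = 8 := by
    have : Nat.card f.range = Nat.card (ZMod 4 × ZMod 2) :=
      Nat.card_congr (Equiv.ofInjective f hf).symm
    rw [this, Nat.card_prod, Nat.card_zmod, Nat.card_zmod]
  calc (8 : ℕ) = Nat.card f.range := hcard.symm
    _ ∣ Nat.card W.Point := AddSubgroup.card_addSubgroup_dvd_card _
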